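/- Let r > 0, λ > 0, α ∈ ℝ, and let (a_ε)_{ε>0} be continuous functions on [0,r] with sup_{ε>0} ∫_0^r |a_ε(u)| du < ∞ and lim_{ε→0} ∫_y^z a_ε(u) du = α·[y = 0] for all 0 ≤ y < z ≤ r. Then for each ε > 0 there is a unique twice continuously differentiable k_ε : [0,r] → ℝ satisfying (1/2)k_ε'' + a_ε k_ε' = λ k_ε on [0,r] with k_ε(0) = 0 and k_ε'(0) = 1; moreover, as ε → 0+, k_ε converges uniformly on [0,r] to the function x ↦ e^{−2α} sinh(√(2λ)·x)/√(2λ), and k_ε'(x) → e^{−2α} cosh(√(2λ)·x) for every x ∈ (0,r]. -/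

import Mathlib

open MeasureTheory Set Filter Topology Real

/-- `SolPK r lam a k` : `k` is a twice continuously differentiable solution on `[0,r]` of
`(1/2)k'' + a k' = λk` with `k(0) = 0` and `k'(0) = 1`. -/
def SolPK (r lam : ℝ) (a k : ℝ → ℝ) : Prop :=
  ContDiffOn ℝ 2 k (Icc 0 r) ∧
  (∀ x ∈ Icc 0 r,
    (1/2) * derivWithin (derivWithin k (Icc 0 r)) (Icc 0 r) x
      + a x * derivWithin k (Icc 0 r) x = lam * k x) ∧
  k 0 = 0 ∧ derivWithin k (Icc 0 r) 0 = 1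

noncomputable section

namespace PKaux

/-- clamp a function to its values on `Icc 0 r` -/
def clampF (r : ℝ) (a : ℝ → ℝ) : ℝ → ℝ := fun x => a (min r (max 0 x))

lemma clampF_eqOn {r : ℝ} (hr : 0 ≤ r) (a : ℝ → ℝ) : EqOn (clampF r a) a (Icc 0 r) := by
  intro x hx
  simp only [clampF, max_eq_right hx.1, min_eq_right hx.2]

lemma clampF_cont {r : ℝ} (hr : 0 ≤ r) {a : ℝ → ℝ} (ha : ContinuousOn a (Icc 0 r)) :
    Continuous (clampF r a) := by
  apply ha.comp_continuous (by fun_prop)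
  intro x
  simp only [mem_Icc]
  constructor
  · exact le_min hr (le_max_left _ _)
  · exact min_le_left _ _

/-- primitive of `b` starting at `0` -/
def primit (b : ℝ → ℝ) (x : ℝ) : ℝ := ∫ t in (0:ℝ)..x, b t

lemma hasDerivAt_primit {b : ℝ → ℝ} (hb : Continuous b) (x : ℝ) :
    HasDerivAt (primit b) (b x) x :=
  (hb.integral_hasStrictDerivAt 0 x).hasDerivAt

lemma continuous_primit {b : ℝ → ℝ} (hb : Continuous b) : Continuous (primit b) := by
  have : Differentiable ℝ (primit b) := fun x => (hasDerivAt_primit hb x).differentiableAt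
  exact this.continuous

/-- `P(x) = exp(2∫₀ˣ b)` -/
def PP (b : ℝ → ℝ) (x : ℝ) : ℝ := Real.exp (2 * primit b x)

lemma PP_pos (b : ℝ → ℝ) (x : ℝ) : 0 < PP b x := Real.exp_pos _

lemma PP_zero (b : ℝ → ℝ) : PP b 0 = 1 := by simp [PP, primit]

lemma hasDerivAt_PP {b : ℝ → ℝ} (hb : Continuous b) (x : ℝ) :
    HasDerivAt (PP b) (PP b x * (2 * b x)) x :=
  ((hasDerivAt_primit hb x).const_mul 2).exp

lemma continuous_PP {b : ℝ → ℝ} (hb : Continuous b) : Continuous (PP b) :=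
  Real.continuous_exp.comp (continuous_const.mul (continuous_primit hb))

lemma PP_le {b : ℝ → ℝ} {M x : ℝ} (h : |primit b x| ≤ M) :
    PP b x ≤ Real.exp (2 * M) := by
  apply Real.exp_le_exp.2
  have := abs_le.1 h
  nlinarith [this.2]

lemma inv_PP_le {b : ℝ → ℝ} {M x : ℝ} (h : |primit b x| ≤ M) :
    (PP b x)⁻¹ ≤ Real.exp (2 * M) := by
  rw [PP, ← Real.exp_neg]
  apply Real.exp_le_exp.2
  have := abs_le.1 h
  nlinarith [this.1]

/-- `G(s) = 1 + 2λ∫₀ˢ P k` -/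
def GG (lam : ℝ) (b k : ℝ → ℝ) (s : ℝ) : ℝ := 1 + 2 * lam * ∫ u in (0:ℝ)..s, PP b u * k u

lemma GG_zero (lam : ℝ) (b k : ℝ → ℝ) : GG lam b k 0 = 1 := by simp [GG]

lemma hasDerivAt_GG {b k : ℝ → ℝ} (hb : Continuous b) (hk : Continuous k) (lam : ℝ) (s : ℝ) :
    HasDerivAt (GG lam b k) (2 * lam * (PP b s * k s)) s := by
  have h1 : HasDerivAt (fun s => ∫ u in (0:ℝ)..s, PP b u * k u) (PP b s * k s) s :=
    (((continuous_PP hb).mul hk).integral_hasStrictDerivAt 0 s).hasDerivAt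
  exact (h1.const_mul (2 * lam)).const_add 1

lemma continuous_GG {b k : ℝ → ℝ} (hb : Continuous b) (hk : Continuous k) (lam : ℝ) :
    Continuous (GG lam b k) := by
  have : Differentiable ℝ (GG lam b k) := fun x => (hasDerivAt_GG hb hk lam x).differentiableAt
  exact this.continuous

/-- `W(x) = ∫₀ˣ G/P` : the Volterra operator output -/
def WW (lam : ℝ) (b k : ℝ → ℝ) (x : ℝ) : ℝ := ∫ s in (0:ℝ)..x, GG lam b k s / PP b s

lemma continuous_GP {b k : ℝ → ℝ} (hb : Continuous b) (hk : Continuous k) (lam : ℝ) :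
    Continuous (fun s => GG lam b k s / PP b s) :=
  (continuous_GG hb hk lam).div (continuous_PP hb) (fun x => (PP_pos b x).ne')

lemma hasDerivAt_WW {b k : ℝ → ℝ} (hb : Continuous b) (hk : Continuous k) (lam : ℝ) (x : ℝ) :
    HasDerivAt (WW lam b k) (GG lam b k x / PP b x) x :=
  ((continuous_GP hb hk lam).integral_hasStrictDerivAt 0 x).hasDerivAt

lemma continuous_WW {b k : ℝ → ℝ} (hb : Continuous b) (hk : Continuous k) (lam : ℝ) :
    Continuous (WW lam b k) := by
  have : Differentiable ℝ (WW lam b k) := fun x => (hasDerivAt_WW hb hk lam x).differentiableAt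
  exact this.continuous

lemma WW_zero (lam : ℝ) (b k : ℝ → ℝ) : WW lam b k 0 = 0 := by simp [WW]


/-- the Volterra fixed-point equation -/
def VolEq (r lam : ℝ) (b k : ℝ → ℝ) : Prop := ∀ x ∈ Icc 0 r, k x = WW lam b k x

/-- Regularity: a globally continuous solution of the Volterra equation gives `SolPK`. -/
theorem solOfVol {r lam : ℝ} {b k : ℝ → ℝ} (hr : 0 < r) (hb : Continuous b)
    (hk : Continuous k) (hvol : VolEq r lam b k) :
    SolPK r lam b k ∧
      ∀ x ∈ Icc 0 r, derivWithin k (Icc 0 r) x = GG lam b k x / PP b x := by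
  have hu : UniqueDiffOn ℝ (Icc (0:ℝ) r) := uniqueDiffOn_Icc hr
  set q : ℝ → ℝ := fun s => GG lam b k s / PP b s with hq
  have hqc : Continuous q := continuous_GP hb hk lam
  have hqd : ∀ x, HasDerivAt q (2 * lam * k x - 2 * b x * q x) x := by
    intro x
    have h1 := (hasDerivAt_GG hb hk lam x).div (hasDerivAt_PP hb x) (PP_pos b x).ne'
    refine h1.congr_deriv ?_
    have h2 : PP b x ≠ 0 := (PP_pos b x).ne'
    rw [hq]
    field_simp
  -- derivWithin k = q on Icc
  have hd1 : ∀ x ∈ Icc (0:ℝ) r, derivWithin k (Icc 0 r) x = q x := by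
    intro x hx
    rw [derivWithin_congr hvol (hvol x hx)]
    exact ((hasDerivAt_WW hb hk lam x).hasDerivWithinAt).derivWithin (hu x hx)
  have hd2 : ∀ x ∈ Icc (0:ℝ) r,
      derivWithin (derivWithin k (Icc 0 r)) (Icc 0 r) x = 2 * lam * k x - 2 * b x * q x := by
    intro x hx
    rw [derivWithin_congr hd1 (hd1 x hx)]
    exact ((hqd x).hasDerivWithinAt).derivWithin (hu x hx)
  have hWcd : ContDiff ℝ 2 (WW lam b k) := by
    rw [show ((2:WithTop ℕ∞)) = 1 + 1 from rfl, contDiff_succ_iff_deriv]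
    refine ⟨fun x => (hasDerivAt_WW hb hk lam x).differentiableAt, by simp, ?_⟩
    have hdw : deriv (WW lam b k) = q := funext fun x => (hasDerivAt_WW hb hk lam x).deriv
    rw [hdw, contDiff_one_iff_deriv]
    refine ⟨fun x => ((hqd x).differentiableAt), ?_⟩
    have : deriv q = fun x => 2 * lam * k x - 2 * b x * q x := funext fun x => (hqd x).deriv
    rw [this]
    fun_prop
  refine ⟨⟨(hWcd.contDiffOn).congr hvol, ?_, ?_, ?_⟩, hd1⟩
  · intro x hx
    rw [hd1 x hx, hd2 x hx]
    ring
  · have h0 : (0:ℝ) ∈ Icc (0:ℝ) r := ⟨le_refl _, hr.le⟩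
    rw [hvol 0 h0, WW_zero]
  · have h0 : (0:ℝ) ∈ Icc (0:ℝ) r := ⟨le_refl _, hr.le⟩
    rw [hd1 0 h0]
    simp [hq, GG_zero, PP_zero]


theorem volOfSol {r lam : ℝ} {b k : ℝ → ℝ} (hr : 0 < r) (hb : Continuous b)
    (hsol : SolPK r lam b k) : VolEq r lam b k := by
  obtain ⟨hcd, heq, h0, h1⟩ := hsol
  have hu : UniqueDiffOn ℝ (Icc (0:ℝ) r) := uniqueDiffOn_Icc hr
  set D := derivWithin k (Icc 0 r) with hD
  set D2 := derivWithin D (Icc 0 r) with hD2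
  have hkc : ContinuousOn k (Icc 0 r) := hcd.continuousOn
  have hDcd : ContDiffOn ℝ 1 D (Icc 0 r) := hcd.derivWithin hu (by norm_num : (1:WithTop ℕ∞) + 1 ≤ 2)
  have hDcont : ContinuousOn D (Icc 0 r) := hDcd.continuousOn
  have hD2cont : ContinuousOn D2 (Icc 0 r) := (hDcd.derivWithin hu (by norm_num : (0:WithTop ℕ∞) + 1 ≤ 1)).continuousOn
  have hkdiff : ∀ x ∈ Icc (0:ℝ) r, HasDerivWithinAt k (D x) (Icc 0 r) x := fun x hx =>
    ((hcd.differentiableOn (by norm_num)) x hx).hasDerivWithinAt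
  have hDdiff : ∀ x ∈ Icc (0:ℝ) r, HasDerivWithinAt D (D2 x) (Icc 0 r) x := fun x hx =>
    ((hDcd.differentiableOn (by norm_num)) x hx).hasDerivWithinAt
  -- values of D
  have hDval : ∀ x ∈ Icc (0:ℝ) r, D x = GG lam b k x / PP b x := by
    intro x hx
    set H : ℝ → ℝ := fun y => PP b y * D y with hH
    have hHder : ∀ t ∈ Ioo (0:ℝ) x, HasDerivWithinAt H (2 * lam * (PP b t * k t)) (Ioi t) t := by
      intro t ht
      have ht' : t ∈ Icc (0:ℝ) r := ⟨ht.1.le, ht.2.le.trans hx.2⟩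
      have htio : t ∈ Ioo (0:ℝ) r := ⟨ht.1, lt_of_lt_of_le ht.2 hx.2⟩
      have hmem : Icc (0:ℝ) r ∈ 𝓝 t := Icc_mem_nhds htio.1 htio.2
      have hDat : HasDerivAt D (D2 t) t := (hDdiff t ht').hasDerivAt hmem
      have hprod : HasDerivAt H (PP b t * (2 * b t) * D t + PP b t * D2 t) t :=
        (hasDerivAt_PP hb t).mul hDat
      have hD2v : D2 t = 2 * lam * k t - 2 * b t * D t := by
        have h := heq t ht'
        linarith
      have : PP b t * (2 * b t) * D t + PP b t * D2 t = 2 * lam * (PP b t * k t) := by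
        rw [hD2v]; ring
      rw [this] at hprod
      exact hprod.hasDerivWithinAt
    have hHcont : ContinuousOn H (Icc 0 x) :=
      ((continuous_PP hb).continuousOn.mul (hDcont.mono (Icc_subset_Icc le_rfl hx.2)))
    have hint : IntervalIntegrable (fun t => 2 * lam * (PP b t * k t)) volume 0 x := by
      apply ContinuousOn.intervalIntegrable
      rw [uIcc_of_le hx.1]
      exact (continuousOn_const.mul ((continuous_PP hb).continuousOn.mul
        (hkc.mono (Icc_subset_Icc le_rfl hx.2))))
    have hftc := intervalIntegral.integral_eq_sub_of_hasDeriv_right_of_le hx.1 hHcont hHder hint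
    have hH0 : H 0 = 1 := by
      show PP b 0 * D 0 = 1
      rw [PP_zero, h1, one_mul]
    have hHx : H x = 1 + 2 * lam * ∫ u in (0:ℝ)..x, PP b u * k u := by
      have : (∫ t in (0:ℝ)..x, 2 * lam * (PP b t * k t))
          = 2 * lam * ∫ u in (0:ℝ)..x, PP b u * k u := by
        rw [intervalIntegral.integral_const_mul]
      rw [this] at hftc
      rw [hH0] at hftc
      linarith
    have hval : PP b x * D x = GG lam b k x := by unfold GG; exact hHx
    rw [eq_div_iff (PP_pos b x).ne', mul_comm]
    exact hval
  -- now integrate D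
  intro x hx
  have hDder : ∀ t ∈ Ioo (0:ℝ) x, HasDerivWithinAt k (D t) (Ioi t) t := by
    intro t ht
    have ht' : t ∈ Icc (0:ℝ) r := ⟨ht.1.le, ht.2.le.trans hx.2⟩
    have hmem : Icc (0:ℝ) r ∈ 𝓝 t := Icc_mem_nhds ht.1 (lt_of_lt_of_le ht.2 hx.2)
    exact ((hkdiff t ht').hasDerivAt hmem).hasDerivWithinAt
  have hDint : IntervalIntegrable D volume 0 x := by
    apply ContinuousOn.intervalIntegrable
    rw [uIcc_of_le hx.1]
    exact hDcont.mono (Icc_subset_Icc le_rfl hx.2)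
  have hftc := intervalIntegral.integral_eq_sub_of_hasDeriv_right_of_le hx.1
    (hkc.mono (Icc_subset_Icc le_rfl hx.2)) hDder hDint
  rw [h0, sub_zero] at hftc
  rw [← hftc, WW]
  apply intervalIntegral.integral_congr
  intro t ht
  rw [uIcc_of_le hx.1] at ht
  exact hDval t ⟨ht.1, ht.2.trans hx.2⟩

/-- Grönwall-type estimate -/
theorem gron {r A B : ℝ} (hr : 0 < r) (hA : 0 ≤ A) (hB : 0 < B) {v : ℝ → ℝ}
    (hv : ContinuousOn v (Icc 0 r))
    (h : ∀ x ∈ Icc (0:ℝ) r, |v x| ≤ A + B * ∫ u in (0:ℝ)..x, |v u|) :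
    ∀ x ∈ Icc (0:ℝ) r, |v x| ≤ A * Real.exp (B * r) := by
  -- clamp |v| to a globally continuous function
  set w : ℝ → ℝ := fun u => |v (min r (max 0 u))| with hw
  have hwc : Continuous w := by
    have h1 : Continuous fun u : ℝ => v (min r (max 0 u)) := by
      apply hv.comp_continuous (by fun_prop)
      intro x; exact ⟨le_min hr.le (le_max_left _ _), min_le_left _ _⟩
    exact h1.abs
  have hweq : ∀ u ∈ Icc (0:ℝ) r, w u = |v u| := by
    intro u hu; rw [hw]; simp only [max_eq_right hu.1, min_eq_right hu.2]
  have hwnn : ∀ u, 0 ≤ w u := fun u => abs_nonneg _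
  set ψ : ℝ → ℝ := fun x => ∫ u in (0:ℝ)..x, w u with hψ
  have hψd : ∀ x, HasDerivAt ψ (w x) x := fun x => (hwc.integral_hasStrictDerivAt 0 x).hasDerivAt
  have hψc : ContinuousOn ψ (Icc 0 r) :=
    (fun x _ => (hψd x).differentiableAt.continuousAt.continuousWithinAt)
  have hψnn : ∀ x ∈ Icc (0:ℝ) r, 0 ≤ ψ x := by
    intro x hx
    exact intervalIntegral.integral_nonneg hx.1 (fun u _ => hwnn u)
  have hint : ∀ x ∈ Icc (0:ℝ) r, (∫ u in (0:ℝ)..x, |v u|) = ψ x := by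
    intro x hx
    apply intervalIntegral.integral_congr
    intro t ht
    rw [uIcc_of_le hx.1] at ht
    exact (hweq t ⟨ht.1, ht.2.trans hx.2⟩).symm
  have key : ∀ x ∈ Icc (0:ℝ) r, ‖ψ x‖ ≤ gronwallBound 0 B A (x - 0) := by
    apply norm_le_gronwallBound_of_norm_deriv_right_le hψc
      (fun x _ => (hψd x).hasDerivWithinAt)
    · simp [hψ]
    · intro x hx
      have hx' : x ∈ Icc (0:ℝ) r := ⟨hx.1, hx.2.le⟩
      have h1 : w x = |v x| := hweq x hx'
      have h2 := h x hx'
      rw [hint x hx'] at h2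
      rw [Real.norm_eq_abs, abs_of_nonneg (hwnn x), h1, Real.norm_eq_abs,
        abs_of_nonneg (hψnn x hx')]
      linarith
  intro x hx
  have h2 := h x hx
  rw [hint x hx] at h2
  have h3 := key x hx
  rw [Real.norm_eq_abs, abs_of_nonneg (hψnn x hx), sub_zero,
    gronwallBound_of_K_ne_0 hB.ne'] at h3
  have hex : Real.exp (B * x) ≤ Real.exp (B * r) := by
    apply Real.exp_le_exp.2
    nlinarith [hx.2, hB]
  have hex1 : (1:ℝ) ≤ Real.exp (B * x) := by
    rw [← Real.exp_zero]
    apply Real.exp_le_exp.2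
    nlinarith [hx.1, hB]
  calc |v x| ≤ A + B * ψ x := h2
    _ ≤ A + B * (A / B * (Real.exp (B * x) - 1)) := by nlinarith [h3]
    _ = A * Real.exp (B * x) := by field_simp; ring
    _ ≤ A * Real.exp (B * r) := by nlinarith [hex]


lemma continuous_parint {f : ℝ → ℝ} (hf : Continuous f) :
    Continuous (fun x => ∫ t in (0:ℝ)..x, f t) := continuous_primit hf

/-- difference of two Volterra outputs -/
theorem WW_sub {lam : ℝ} {b k₁ k₂ : ℝ → ℝ} (hb : Continuous b) (hk₁ : Continuous k₁)
    (hk₂ : Continuous k₂) (x : ℝ) :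
    WW lam b k₁ x - WW lam b k₂ x
      = 2 * lam * ∫ s in (0:ℝ)..x, (∫ u in (0:ℝ)..s, PP b u * (k₁ u - k₂ u)) / PP b s := by
  have hPc := continuous_PP hb
  have hi1 : ∀ s : ℝ, (∫ u in (0:ℝ)..s, PP b u * (k₁ u - k₂ u))
      = (∫ u in (0:ℝ)..s, PP b u * k₁ u) - ∫ u in (0:ℝ)..s, PP b u * k₂ u := by
    intro s
    rw [← intervalIntegral.integral_sub ((hPc.mul hk₁).intervalIntegrable (u := fun u => PP b u * k₁ u) _ _)
      ((hPc.mul hk₂).intervalIntegrable (u := fun u => PP b u * k₂ u) _ _)]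
    congr 1; ext u; ring
  rw [WW, WW, ← intervalIntegral.integral_sub
    (((continuous_GP hb hk₁ lam).intervalIntegrable _ _))
    (((continuous_GP hb hk₂ lam).intervalIntegrable _ _)),
    ← intervalIntegral.integral_const_mul]
  apply intervalIntegral.integral_congr
  intro s _
  simp only
  rw [div_sub_div_same, GG, GG, hi1 s]
  have hP := (PP_pos b s).ne'
  field_simp
  ring

/-- main integral bound -/
theorem key_bound {r CP : ℝ} (hr : 0 < r) {b w : ℝ → ℝ} (hb : Continuous b) (hCP1 : 1 ≤ CP)
    (hP : ∀ x ∈ Icc (0:ℝ) r, PP b x ≤ CP ∧ (PP b x)⁻¹ ≤ CP) (hw : Continuous w) :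
    ∀ x ∈ Icc (0:ℝ) r,
      |∫ s in (0:ℝ)..x, (∫ u in (0:ℝ)..s, PP b u * w u) / PP b s|
        ≤ CP ^ 2 * r * ∫ u in (0:ℝ)..x, |w u| := by
  intro x hx
  have hPc := continuous_PP hb
  have hCP0 : (0:ℝ) < CP := lt_of_lt_of_le one_pos hCP1
  have hIc : Continuous fun s : ℝ => (∫ u in (0:ℝ)..s, PP b u * w u) / PP b s :=
    (continuous_parint (hPc.mul hw)).div hPc (fun s => (PP_pos b s).ne')
  set J : ℝ := ∫ u in (0:ℝ)..x, |w u| with hJ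
  have hJ0 : 0 ≤ J := intervalIntegral.integral_nonneg hx.1 (fun u _ => abs_nonneg _)
  have h1 : |∫ s in (0:ℝ)..x, (∫ u in (0:ℝ)..s, PP b u * w u) / PP b s|
      ≤ ∫ s in (0:ℝ)..x, |(∫ u in (0:ℝ)..s, PP b u * w u) / PP b s| :=
    intervalIntegral.abs_integral_le_integral_abs hx.1
  have h2 : ∀ s ∈ Icc (0:ℝ) x, |(∫ u in (0:ℝ)..s, PP b u * w u) / PP b s| ≤ CP ^ 2 * J := by
    intro s hs
    have hs' : s ∈ Icc (0:ℝ) r := ⟨hs.1, hs.2.trans hx.2⟩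
    have hinner : |∫ u in (0:ℝ)..s, PP b u * w u| ≤ CP * J := by
      have ha : |∫ u in (0:ℝ)..s, PP b u * w u| ≤ ∫ u in (0:ℝ)..s, |PP b u * w u| :=
        intervalIntegral.abs_integral_le_integral_abs hs.1
      have hbd : ∫ u in (0:ℝ)..s, |PP b u * w u| ≤ ∫ u in (0:ℝ)..s, CP * |w u| := by
        apply intervalIntegral.integral_mono_on hs.1
          ((hPc.mul hw).abs.intervalIntegrable _ _)
          ((continuous_const.mul hw.abs).intervalIntegrable _ _)
        intro u hu
        have hu' : u ∈ Icc (0:ℝ) r := ⟨hu.1, hu.2.trans hs'.2⟩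
        show |PP b u * w u| ≤ CP * |w u|
        rw [abs_mul, abs_of_pos (PP_pos b u)]
        exact mul_le_mul_of_nonneg_right (hP u hu').1 (abs_nonneg _)
      have hmono : ∫ u in (0:ℝ)..s, CP * |w u| ≤ CP * J := by
        rw [intervalIntegral.integral_const_mul]
        apply mul_le_mul_of_nonneg_left ?_ hCP0.le
        rw [hJ, ← intervalIntegral.integral_add_adjacent_intervals
          (a := (0:ℝ)) (b := s) (c := x) (hw.abs.intervalIntegrable _ _)
          (hw.abs.intervalIntegrable _ _)]
        have : (0:ℝ) ≤ ∫ u in s..x, |w u| :=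
          intervalIntegral.integral_nonneg hs.2 (fun u _ => abs_nonneg _)
        linarith
      linarith
    rw [abs_div, abs_of_pos (PP_pos b s)]
    rw [div_eq_mul_inv]
    calc |∫ u in (0:ℝ)..s, PP b u * w u| * (PP b s)⁻¹
        ≤ (CP * J) * CP := by
          apply mul_le_mul hinner (hP s hs').2 (inv_nonneg.2 (PP_pos b s).le)
          positivity
      _ = CP ^ 2 * J := by ring
  have h3 : ∫ s in (0:ℝ)..x, |(∫ u in (0:ℝ)..s, PP b u * w u) / PP b s|
      ≤ ∫ s in (0:ℝ)..x, CP ^ 2 * J := by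
    apply intervalIntegral.integral_mono_on hx.1 (hIc.abs.intervalIntegrable _ _)
      (intervalIntegrable_const) h2
  rw [intervalIntegral.integral_const, smul_eq_mul, sub_zero] at h3
  have hprod : 0 ≤ (CP ^ 2 * J) * (r - x) :=
    mul_nonneg (mul_nonneg (sq_nonneg CP) hJ0) (sub_nonneg.2 hx.2)
  nlinarith [h1, h3]

lemma GG_congr {r lam : ℝ} {b k₁ k₂ : ℝ → ℝ} (h : EqOn k₁ k₂ (Icc 0 r)) :
    ∀ s ∈ Icc (0:ℝ) r, GG lam b k₁ s = GG lam b k₂ s := by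
  intro s hs
  rw [GG, GG]
  congr 1
  congr 1
  apply intervalIntegral.integral_congr
  intro u hu
  rw [uIcc_of_le hs.1] at hu
  dsimp only
  rw [h ⟨hu.1, hu.2.trans hs.2⟩]

lemma WW_congr {r lam : ℝ} {b k₁ k₂ : ℝ → ℝ} (h : EqOn k₁ k₂ (Icc 0 r)) :
    ∀ x ∈ Icc (0:ℝ) r, WW lam b k₁ x = WW lam b k₂ x := by
  intro x hx
  apply intervalIntegral.integral_congr
  intro s hs
  rw [uIcc_of_le hx.1] at hs
  dsimp only
  rw [GG_congr h s ⟨hs.1, hs.2.trans hx.2⟩]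

/-- bounds on PP from a bound on the primitive -/
lemma PP_bounds {r : ℝ} {b : ℝ → ℝ} (hb : Continuous b) :
    ∃ CP : ℝ, 1 ≤ CP ∧ ∀ x ∈ Icc (0:ℝ) r, PP b x ≤ CP ∧ (PP b x)⁻¹ ≤ CP := by
  obtain ⟨Mp, hMp⟩ := isCompact_Icc.exists_bound_of_continuousOn
    (continuous_primit hb).continuousOn
  refine ⟨max (Real.exp (2 * Mp)) 1, le_max_right _ _, ?_⟩
  intro x hx
  have h := hMp x hx
  rw [Real.norm_eq_abs] at h
  have h2 := abs_le.1 h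
  constructor
  · refine le_trans ?_ (le_max_left _ _)
    rw [PP]
    apply Real.exp_le_exp.2
    nlinarith [h2.2]
  · refine le_trans ?_ (le_max_left _ _)
    rw [PP, ← Real.exp_neg]
    apply Real.exp_le_exp.2
    nlinarith [h2.1]

/-- uniqueness for the Volterra equation -/
theorem volEq_unique {r lam : ℝ} {b k₁ k₂ : ℝ → ℝ} (hr : 0 < r) (hlam : 0 < lam)
    (hb : Continuous b) (h₁c : ContinuousOn k₁ (Icc 0 r)) (h₂c : ContinuousOn k₂ (Icc 0 r))
    (h₁ : VolEq r lam b k₁) (h₂ : VolEq r lam b k₂) : EqOn k₁ k₂ (Icc 0 r) := by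
  have hPc := continuous_PP hb
  set K₁ : ℝ → ℝ := clampF r k₁ with hK₁
  set K₂ : ℝ → ℝ := clampF r k₂ with hK₂
  have hK₁c : Continuous K₁ := clampF_cont hr.le h₁c
  have hK₂c : Continuous K₂ := clampF_cont hr.le h₂c
  set v : ℝ → ℝ := fun u => K₁ u - K₂ u with hv
  have hvc : Continuous v := hK₁c.sub hK₂c
  have hveq : ∀ u ∈ Icc (0:ℝ) r, v u = k₁ u - k₂ u := by
    intro u hu
    rw [hv]
    dsimp only
    rw [hK₁, hK₂, clampF_eqOn hr.le k₁ hu, clampF_eqOn hr.le k₂ hu]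
  obtain ⟨CP, hCP1, hPbd⟩ := PP_bounds (r := r) hb
  have hkey : ∀ x ∈ Icc (0:ℝ) r,
      |v x| ≤ 0 + (2 * lam * (CP ^ 2 * r)) * ∫ u in (0:ℝ)..x, |v u| := by
    intro x hx
    have hd : v x = 2 * lam
        * ∫ s in (0:ℝ)..x, (∫ u in (0:ℝ)..s, PP b u * v u) / PP b s := by
      rw [hveq x hx, h₁ x hx, h₂ x hx,
        WW_congr (clampF_eqOn hr.le k₁).symm x hx, WW_congr (clampF_eqOn hr.le k₂).symm x hx]
      exact WW_sub hb hK₁c hK₂c x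
    have hkb := key_bound hr hb hCP1 hPbd hvc x hx
    have h5 := mul_le_mul_of_nonneg_left hkb (by positivity : (0:ℝ) ≤ 2 * lam)
    rw [hd, abs_mul, abs_of_pos (show (0:ℝ) < 2 * lam by positivity)]
    linarith
  have hz := gron hr (le_refl 0) (by positivity : (0:ℝ) < 2 * lam * (CP ^ 2 * r))
    hvc.continuousOn hkey
  intro x hx
  have h6 := hz x hx
  rw [zero_mul] at h6
  have h0 : v x = 0 := abs_eq_zero.1 (le_antisymm h6 (abs_nonneg _))
  rw [hveq x hx] at h0
  linarith

/-- one step of the Picard iteration contracts a monomial bound -/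
theorem step_bound {r lam CP E : ℝ} {m : ℕ} (hr : 0 < r) (hlam : 0 < lam) (hCP1 : 1 ≤ CP)
    {b k₁ k₂ : ℝ → ℝ} (hb : Continuous b)
    (hP : ∀ x ∈ Icc (0:ℝ) r, PP b x ≤ CP ∧ (PP b x)⁻¹ ≤ CP)
    (hk₁ : Continuous k₁) (hk₂ : Continuous k₂) (hE : 0 ≤ E)
    (h : ∀ u ∈ Icc (0:ℝ) r, |k₁ u - k₂ u| ≤ E * u ^ (2*m)) :
    ∀ x ∈ Icc (0:ℝ) r, |WW lam b k₁ x - WW lam b k₂ x|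
      ≤ 2 * lam * CP^2 * E / ((2*m+1) * (2*m+2)) * x ^ (2*m+2) := by
  intro x hx
  have hPc := continuous_PP hb
  have hCP0 : (0:ℝ) < CP := lt_of_lt_of_le one_pos hCP1
  set w : ℝ → ℝ := fun u => k₁ u - k₂ u with hw
  have hwc : Continuous w := hk₁.sub hk₂
  have hIc : Continuous fun s : ℝ => (∫ u in (0:ℝ)..s, PP b u * w u) / PP b s :=
    (continuous_parint (hPc.mul hwc)).div hPc (fun s => (PP_pos b s).ne')
  -- inner bound
  have hinner : ∀ s ∈ Icc (0:ℝ) x,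
      |(∫ u in (0:ℝ)..s, PP b u * w u) / PP b s|
        ≤ CP^2 * E / (2*(m:ℝ)+1) * s ^ (2*m+1) := by
    intro s hs
    have hs' : s ∈ Icc (0:ℝ) r := ⟨hs.1, hs.2.trans hx.2⟩
    have habs : |∫ u in (0:ℝ)..s, PP b u * w u| ≤ ∫ u in (0:ℝ)..s, |PP b u * w u| :=
      intervalIntegral.abs_integral_le_integral_abs hs.1
    have hmono : ∫ u in (0:ℝ)..s, |PP b u * w u| ≤ ∫ u in (0:ℝ)..s, CP * E * u ^ (2*m) := by
      apply intervalIntegral.integral_mono_on hs.1 ((hPc.mul hwc).abs.intervalIntegrable _ _)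
        ((continuous_const.mul (continuous_pow _)).intervalIntegrable _ _)
      intro u hu
      have hu' : u ∈ Icc (0:ℝ) r := ⟨hu.1, hu.2.trans hs'.2⟩
      show |PP b u * w u| ≤ CP * E * u ^ (2*m)
      rw [abs_mul, abs_of_pos (PP_pos b u)]
      have h1 := (hP u hu').1
      have h2 := h u hu'
      have hu0 : (0:ℝ) ≤ u ^ (2*m) := pow_nonneg hu.1 _
      calc PP b u * |w u| ≤ CP * (E * u ^ (2*m)) :=
            mul_le_mul h1 h2 (abs_nonneg _) hCP0.le
        _ = CP * E * u ^ (2*m) := by ring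
    have hval : ∫ u in (0:ℝ)..s, CP * E * u ^ (2*m)
        = CP * E * s ^ (2*m+1) / (2*(m:ℝ)+1) := by
      rw [intervalIntegral.integral_const_mul, integral_pow]
      have : ((2*m : ℕ) : ℝ) + 1 = 2*(m:ℝ)+1 := by push_cast; ring
      rw [zero_pow (by omega : 2*m+1 ≠ 0), this]
      ring
    have hdenom : (0:ℝ) < 2*(m:ℝ)+1 := by positivity
    rw [abs_div, abs_of_pos (PP_pos b s), div_eq_mul_inv]
    have h3 : |∫ u in (0:ℝ)..s, PP b u * w u| ≤ CP * E * s ^ (2*m+1) / (2*(m:ℝ)+1) := by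
      rw [← hval]; linarith
    calc |∫ u in (0:ℝ)..s, PP b u * w u| * (PP b s)⁻¹
        ≤ (CP * E * s ^ (2*m+1) / (2*(m:ℝ)+1)) * CP := by
          apply mul_le_mul h3 (hP s hs').2 (inv_nonneg.2 (PP_pos b s).le)
          apply div_nonneg (mul_nonneg (mul_nonneg hCP0.le hE) (pow_nonneg hs.1 _))
            (by positivity)
      _ = CP^2 * E / (2*(m:ℝ)+1) * s ^ (2*m+1) := by ring
  -- outer bound
  rw [WW_sub hb hk₁ hk₂ x]
  have habs2 : |∫ s in (0:ℝ)..x, (∫ u in (0:ℝ)..s, PP b u * w u) / PP b s|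
      ≤ ∫ s in (0:ℝ)..x, |(∫ u in (0:ℝ)..s, PP b u * w u) / PP b s| :=
    intervalIntegral.abs_integral_le_integral_abs hx.1
  have hmono2 : ∫ s in (0:ℝ)..x, |(∫ u in (0:ℝ)..s, PP b u * w u) / PP b s|
      ≤ ∫ s in (0:ℝ)..x, CP^2 * E / (2*(m:ℝ)+1) * s ^ (2*m+1) := by
    apply intervalIntegral.integral_mono_on hx.1 (hIc.abs.intervalIntegrable _ _)
      ((continuous_const.mul (continuous_pow _)).intervalIntegrable _ _) hinner
  have hval2 : ∫ s in (0:ℝ)..x, CP^2 * E / (2*(m:ℝ)+1) * s ^ (2*m+1)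
      = CP^2 * E / (2*(m:ℝ)+1) * (x ^ (2*m+2) / (2*(m:ℝ)+2)) := by
    rw [intervalIntegral.integral_const_mul, integral_pow]
    have h4 : ((2*m+1 : ℕ) : ℝ) + 1 = 2*(m:ℝ)+2 := by push_cast; ring
    rw [zero_pow (by omega : 2*m+1+1 ≠ 0), h4]
    have h5 : 2*m+1+1 = 2*m+2 := by omega
    rw [h5]
    ring
  have hfin : 2 * lam * |∫ s in (0:ℝ)..x, (∫ u in (0:ℝ)..s, PP b u * w u) / PP b s|
      ≤ 2 * lam * (CP^2 * E / (2*(m:ℝ)+1) * (x ^ (2*m+2) / (2*(m:ℝ)+2))) := by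
    apply mul_le_mul_of_nonneg_left ?_ (by positivity)
    rw [← hval2]
    linarith
  rw [abs_mul, abs_of_pos (show (0:ℝ) < 2*lam by positivity)]
  calc 2 * lam * |∫ s in (0:ℝ)..x, (∫ u in (0:ℝ)..s, PP b u * w u) / PP b s|
      ≤ 2 * lam * (CP^2 * E / (2*(m:ℝ)+1) * (x ^ (2*m+2) / (2*(m:ℝ)+2))) := hfin
    _ = 2 * lam * CP^2 * E / ((2*m+1) * (2*m+2)) * x ^ (2*m+2) := by
        push_cast
        field_simp

/-- existence of a continuous solution of the Volterra equation -/
theorem exists_vol {r lam : ℝ} (hr : 0 < r) (hlam : 0 < lam) {b : ℝ → ℝ} (hb : Continuous b) :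
    ∃ k : ℝ → ℝ, Continuous k ∧ VolEq r lam b k := by
  obtain ⟨CP, hCP1, hPbd⟩ := PP_bounds (r := r) hb
  have hCP0 : (0:ℝ) < CP := lt_of_lt_of_le one_pos hCP1
  set C : ℝ := 2 * lam * CP^2 with hC
  have hC0 : 0 < C := by positivity
  haveI : CompactSpace (Icc (0:ℝ) r) := isCompact_iff_compactSpace.mp isCompact_Icc
  set X := C(Icc (0:ℝ) r, ℝ)
  haveI : Nonempty X := ⟨ContinuousMap.const _ 0⟩
  have hmem : ∀ x : ℝ, min r (max 0 x) ∈ Icc (0:ℝ) r :=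
    fun x => ⟨le_min hr.le (le_max_left _ _), min_le_left _ _⟩
  set ext : X → ℝ → ℝ := fun f x => f ⟨min r (max 0 x), hmem x⟩ with hext
  have hextc : ∀ f : X, Continuous (ext f) := by
    intro f
    exact f.continuous.comp (Continuous.subtype_mk (by fun_prop) _)
  have hexteq : ∀ (f : X) (x : ℝ) (hx : x ∈ Icc (0:ℝ) r), ext f x = f ⟨x, hx⟩ := by
    intro f x hx
    rw [hext]
    dsimp only
    congr 1
    exact Subtype.ext (by simp [max_eq_right hx.1, min_eq_right hx.2])
  set T : X → X := fun f => ContinuousMap.mk (fun p : Icc (0:ℝ) r => WW lam b (ext f) p.1)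
    ((continuous_WW hb (hextc f) lam).comp continuous_subtype_val) with hT
  have hTapp : ∀ (f : X) (x : ℝ) (hx : x ∈ Icc (0:ℝ) r),
      ext (T f) x = WW lam b (ext f) x := by
    intro f x hx
    rw [hexteq (T f) x hx]
    rfl
  -- iterated estimate
  have key : ∀ (n : ℕ) (f g : X), ∀ x ∈ Icc (0:ℝ) r,
      |ext (T^[n] f) x - ext (T^[n] g) x| ≤ dist f g * C^n * x ^ (2*n) / n.factorial := by
    intro n
    induction n with
    | zero =>
      intro f g x hx
      simp only [Function.iterate_zero, id_eq, pow_zero, mul_one, Nat.factorial_zero,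
        Nat.cast_one, div_one]
      rw [hexteq f x hx, hexteq g x hx, ← Real.dist_eq]
      simpa using ContinuousMap.dist_apply_le_dist (⟨x, hx⟩ : Icc (0:ℝ) r)
    | succ n ih =>
      intro f g x hx
      rw [Function.iterate_succ_apply', Function.iterate_succ_apply',
        hTapp _ x hx, hTapp _ x hx]
      set E : ℝ := dist f g * C^n / n.factorial with hE
      have hE0 : 0 ≤ E := by
        apply div_nonneg (mul_nonneg dist_nonneg (by positivity)) (by positivity)
      have hbnd : ∀ u ∈ Icc (0:ℝ) r,
          |ext (T^[n] f) u - ext (T^[n] g) u| ≤ E * u ^ (2*n) := by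
        intro u hu
        have h1 := ih f g u hu
        calc |ext (T^[n] f) u - ext (T^[n] g) u|
            ≤ dist f g * C^n * u ^ (2*n) / n.factorial := h1
          _ = E * u ^ (2*n) := by rw [hE]; ring
      have hsb := step_bound hr hlam hCP1 hb hPbd (hextc _) (hextc _) hE0 hbnd x hx
      refine le_trans hsb ?_
      -- arithmetic
      have hxp : (0:ℝ) ≤ x ^ (2*n+2) := pow_nonneg hx.1 _
      have hfact : ((n+1).factorial : ℝ) = ((n:ℝ)+1) * n.factorial := by
        rw [Nat.factorial_succ]; push_cast; ring
      have harith : 2 * lam * CP^2 * E / ((2*(n:ℝ)+1) * (2*(n:ℝ)+2))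
          ≤ dist f g * C^(n+1) / (n+1).factorial := by
        rw [hE, hC]
        have hn0 : (0:ℝ) ≤ (n:ℝ) := Nat.cast_nonneg n
        have hf0 : (0:ℝ) < n.factorial := by exact_mod_cast n.factorial_pos
        rw [hfact]
        rw [div_le_div_iff₀ (by positivity) (by positivity)]
        have hd : dist f g * ((2*lam*CP^2)^n) * ((n:ℝ)+1) ≤
            dist f g * ((2*lam*CP^2)^n) * ((2*(n:ℝ)+1) * (2*(n:ℝ)+2)) := by
          apply mul_le_mul_of_nonneg_left ?_ (mul_nonneg dist_nonneg (by positivity))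
          nlinarith [hn0]
        calc 2 * lam * CP^2 * (dist f g * (2*lam*CP^2)^n / ↑n.factorial) * (((n:ℝ)+1) * ↑n.factorial)
            = (2*lam*CP^2) * (dist f g * ((2*lam*CP^2)^n) * ((n:ℝ)+1)) := by
              field_simp
          _ ≤ (2*lam*CP^2) * (dist f g * ((2*lam*CP^2)^n) * ((2*(n:ℝ)+1) * (2*(n:ℝ)+2))) := by
              apply mul_le_mul_of_nonneg_left hd (by positivity)
          _ = dist f g * (2*lam*CP^2)^(n+1) / ↑n.factorial * (((2*(n:ℝ)+1) * (2*(n:ℝ)+2)) * ↑n.factorial) := by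
              field_simp
              ring
          _ = dist f g * (2*lam*CP^2)^(n+1) * ((2*(n:ℝ)+1) * (2*(n:ℝ)+2)) := by
              field_simp
      have h2 : 2*(n:ℕ)+2 = 2*(n+1) := by omega
      calc 2 * lam * CP^2 * E / ((2*(n:ℝ)+1) * (2*(n:ℝ)+2)) * x ^ (2*n+2)
          ≤ dist f g * C^(n+1) / (n+1).factorial * x ^ (2*n+2) :=
            mul_le_mul_of_nonneg_right harith hxp
        _ = dist f g * C^(n+1) * x ^ (2*(n+1)) / (n+1).factorial := by
            rw [← h2]; ring
  -- contraction
  have hdist : ∀ (n : ℕ) (f g : X),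
      dist (T^[n] f) (T^[n] g) ≤ (C*r^2)^n / n.factorial * dist f g := by
    intro n f g
    have hq0 : (0:ℝ) ≤ (C*r^2)^n / n.factorial * dist f g := by
      apply mul_nonneg (by positivity) dist_nonneg
    rw [ContinuousMap.dist_le hq0]
    intro p
    rw [show (T^[n] f) p = ext (T^[n] f) p.1 from (hexteq _ _ p.2).symm,
      show (T^[n] g) p = ext (T^[n] g) p.1 from (hexteq _ _ p.2).symm, Real.dist_eq]
    have h1 := key n f g p.1 p.2
    have h2 : (p.1:ℝ) ^ (2*n) ≤ r ^ (2*n) := pow_le_pow_left₀ p.2.1 p.2.2 _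
    have h3 : (C*r^2)^n = C^n * r^(2*n) := by rw [mul_pow, ← pow_mul]
    calc |ext (T^[n] f) p.1 - ext (T^[n] g) p.1|
        ≤ dist f g * C^n * (p.1:ℝ) ^ (2*n) / n.factorial := h1
      _ ≤ dist f g * C ^ n * r ^ (2*n) / ↑n.factorial := by
          have hf0 : (0:ℝ) < n.factorial := by exact_mod_cast n.factorial_pos
          have h4 : dist f g * C ^ n * (p.1:ℝ) ^ (2*n) ≤ dist f g * C ^ n * r ^ (2*n) :=
            mul_le_mul_of_nonneg_left h2 (mul_nonneg dist_nonneg (pow_nonneg hC0.le n))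
          exact (div_le_div_iff_of_pos_right hf0).2 h4
      _ = (C*r^2)^n / n.factorial * dist f g := by rw [h3]; ring
  -- choose n making the iterate a contraction
  have htend : Tendsto (fun n : ℕ => (C*r^2)^n / n.factorial) atTop (𝓝 0) :=
    FloorSemiring.tendsto_pow_div_factorial_atTop (C*r^2)
  obtain ⟨n, hn⟩ := (htend.eventually (gt_mem_nhds one_pos)).exists
  set q : ℝ := (C*r^2)^n / n.factorial with hq
  have hq0 : 0 ≤ q := by positivity
  have hq1 : q < 1 := hn
  have hlip : LipschitzWith q.toNNReal (T^[n]) := by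
    apply LipschitzWith.of_dist_le_mul
    intro f g
    rw [Real.coe_toNNReal q hq0]
    exact hdist n f g
  have hcontr : ContractingWith q.toNNReal (T^[n]) := by
    constructor
    · exact_mod_cast (by rw [Real.coe_toNNReal q hq0]; exact hq1 : (q.toNNReal : ℝ) < 1)
    · exact hlip
  haveI : CompleteSpace X := by infer_instance
  set φ : X := ContractingWith.fixedPoint (T^[n]) hcontr with hφ
  have hfixn : Function.IsFixedPt T φ := hcontr.isFixedPt_fixedPoint_iterate
  refine ⟨ext φ, hextc φ, ?_⟩
  intro x hx
  calc ext φ x = φ ⟨x, hx⟩ := hexteq φ x hx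
    _ = (T φ) ⟨x, hx⟩ := by rw [hfixn]
    _ = WW lam b (ext φ) x := rfl


/-- the limit solution -/
def ksol (lam α : ℝ) : ℝ → ℝ := fun x =>
  Real.exp (-2 * α) * Real.sinh (Real.sqrt (2 * lam) * x) / Real.sqrt (2 * lam)

lemma continuous_ksol (lam α : ℝ) : Continuous (ksol lam α) := by
  unfold ksol; fun_prop

lemma integral_cosh_comp {c : ℝ} (hc : 0 < c) (s : ℝ) :
    ∫ u in (0:ℝ)..s, Real.cosh (c * u) = Real.sinh (c * s) / c := by
  have hd : ∀ u ∈ uIcc (0:ℝ) s, HasDerivAt (fun y => Real.sinh (c * y) / c)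
      (Real.cosh (c * u)) u := by
    intro u _
    have h1 : HasDerivAt (fun y : ℝ => c * y) c u := by
      simpa using (hasDerivAt_id u).const_mul c
    have h2 := (Real.hasDerivAt_sinh (c * u)).comp u h1
    have h3 := h2.div_const c
    rwa [mul_div_assoc, div_self hc.ne', mul_one] at h3
  rw [intervalIntegral.integral_eq_sub_of_hasDerivAt hd
    ((Real.continuous_cosh.comp (continuous_const.mul continuous_id)).intervalIntegrable _ _)]
  simp

lemma integral_sinh_comp {c : ℝ} (hc : 0 < c) (s : ℝ) :
    ∫ u in (0:ℝ)..s, Real.sinh (c * u) = (Real.cosh (c * s) - 1) / c := by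
  have hd : ∀ u ∈ uIcc (0:ℝ) s, HasDerivAt (fun y => Real.cosh (c * y) / c)
      (Real.sinh (c * u)) u := by
    intro u _
    have h1 : HasDerivAt (fun y : ℝ => c * y) c u := by
      simpa using (hasDerivAt_id u).const_mul c
    have h2 := (Real.hasDerivAt_cosh (c * u)).comp u h1
    have h3 := h2.div_const c
    rwa [mul_div_assoc, div_self hc.ne', mul_one] at h3
  rw [intervalIntegral.integral_eq_sub_of_hasDerivAt hd
    ((Real.continuous_sinh.comp (continuous_const.mul continuous_id)).intervalIntegrable _ _)]
  simp [sub_div]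

lemma ksol_int {lam α : ℝ} (hlam : 0 < lam) (s : ℝ) :
    2 * lam * ∫ u in (0:ℝ)..s, ksol lam α u
      = Real.exp (-2 * α) * (Real.cosh (Real.sqrt (2 * lam) * s) - 1) := by
  set c := Real.sqrt (2 * lam) with hcdef
  have hc : 0 < c := Real.sqrt_pos.2 (by positivity)
  have hc2 : c ^ 2 = 2 * lam := Real.sq_sqrt (by positivity)
  have h1 : ∀ u, ksol lam α u = (Real.exp (-2 * α) / c) * Real.sinh (c * u) := by
    intro u; rw [ksol]; ring
  rw [intervalIntegral.integral_congr (fun u _ => h1 u), intervalIntegral.integral_const_mul,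
    integral_sinh_comp hc]
  rw [← hc2]
  field_simp

lemma ksol_eq_int {lam α : ℝ} (hlam : 0 < lam) (x : ℝ) :
    ksol lam α x = ∫ s in (0:ℝ)..x,
      Real.exp (-2 * α) * Real.cosh (Real.sqrt (2 * lam) * s) := by
  set c := Real.sqrt (2 * lam) with hcdef
  have hc : 0 < c := Real.sqrt_pos.2 (by positivity)
  rw [intervalIntegral.integral_const_mul, integral_cosh_comp hc, ksol]
  ring

lemma ksol_bound {lam α r : ℝ} (hlam : 0 < lam) (hr : 0 < r) :
    ∀ u ∈ Icc (0:ℝ) r, |ksol lam α u|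
      ≤ Real.exp (-2 * α) * Real.sinh (Real.sqrt (2 * lam) * r) / Real.sqrt (2 * lam) := by
  intro u hu
  set c := Real.sqrt (2 * lam) with hcdef
  have hc : 0 < c := Real.sqrt_pos.2 (by positivity)
  have h0 : 0 ≤ Real.sinh (c * u) := Real.sinh_nonneg_iff.2 (mul_nonneg hc.le hu.1)
  have h1 : Real.sinh (c * u) ≤ Real.sinh (c * r) :=
    Real.sinh_le_sinh.2 (mul_le_mul_of_nonneg_left hu.2 hc.le)
  rw [ksol, abs_div, abs_of_pos hc, abs_mul, abs_of_pos (Real.exp_pos _), abs_of_nonneg h0]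
  apply div_le_div_of_nonneg_right ?h ?hc
  case hc => exact hc.le
  case h => exact mul_le_mul_of_nonneg_left h1 (Real.exp_pos _).le

/-- `|∫₀ˣ g| ≤ ∫₀ʳ |g|` for `x ∈ [0,r]` -/
lemma abs_int_le {r x : ℝ} {g : ℝ → ℝ} (hg : Continuous g) (hx : x ∈ Icc (0:ℝ) r) :
    |∫ u in (0:ℝ)..x, g u| ≤ ∫ u in (0:ℝ)..r, |g u| := by
  refine le_trans (intervalIntegral.abs_integral_le_integral_abs hx.1) ?_
  rw [← intervalIntegral.integral_add_adjacent_intervals (a := (0:ℝ)) (b := x) (c := r)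
    (hg.abs.intervalIntegrable _ _) (hg.abs.intervalIntegrable _ _)]
  have : (0:ℝ) ≤ ∫ u in x..r, |g u| :=
    intervalIntegral.integral_nonneg hx.2 (fun u _ => abs_nonneg _)
  linarith


/-- the inhomogeneity error functional -/
def FF (lam α : ℝ) (b : ℝ → ℝ) (s : ℝ) : ℝ :=
  (PP b s)⁻¹ * (∫ u in (0:ℝ)..s, PP b u * ksol lam α u) - ∫ u in (0:ℝ)..s, ksol lam α u

lemma continuous_FF {b : ℝ → ℝ} (hb : Continuous b) (lam α : ℝ) :
    Continuous (FF lam α b) := by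
  unfold FF
  apply Continuous.sub
  · exact ((continuous_PP hb).inv₀ (fun s => (PP_pos b s).ne')).mul
      (continuous_parint ((continuous_PP hb).mul (continuous_ksol lam α)))
  · exact continuous_parint (continuous_ksol lam α)

/-- pointwise decomposition of the integrand -/
lemma integrand_decomp {lam α : ℝ} (hlam : 0 < lam) {b K : ℝ → ℝ}
    (hb : Continuous b) (hK : Continuous K) (s : ℝ) :
    GG lam b K s / PP b s - Real.exp (-2*α) * Real.cosh (Real.sqrt (2*lam) * s)
      = ((PP b s)⁻¹ - Real.exp (-2*α))
        + 2*lam * ((∫ u in (0:ℝ)..s, PP b u * (K u - ksol lam α u)) / PP b s)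
        + 2*lam * FF lam α b s := by
  have hPc := continuous_PP hb
  have hsub : (∫ u in (0:ℝ)..s, PP b u * (K u - ksol lam α u))
      = (∫ u in (0:ℝ)..s, PP b u * K u) - ∫ u in (0:ℝ)..s, PP b u * ksol lam α u := by
    rw [← intervalIntegral.integral_sub ((hPc.mul hK).intervalIntegrable (u := fun u => PP b u * K u) _ _)
      ((hPc.mul (continuous_ksol lam α)).intervalIntegrable (u := fun u => PP b u * ksol lam α u) _ _)]
    congr 1; ext u; ring
  have hks := ksol_int (α := α) hlam s
  have hP0 : PP b s ≠ 0 := (PP_pos b s).ne'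
  rw [GG, FF, hsub, div_eq_mul_inv, div_eq_mul_inv]
  linear_combination hks

/-- the quantitative error bound -/
theorem err_bound {r lam α CP : ℝ} (hr : 0 < r) (hlam : 0 < lam) (hCP1 : 1 ≤ CP)
    {b K : ℝ → ℝ} (hb : Continuous b) (hK : Continuous K)
    (hP : ∀ x ∈ Icc (0:ℝ) r, PP b x ≤ CP ∧ (PP b x)⁻¹ ≤ CP)
    (hvol : VolEq r lam b K) :
    ∀ x ∈ Icc (0:ℝ) r, |K x - ksol lam α x| ≤
      ((∫ s in (0:ℝ)..r, |(PP b s)⁻¹ - Real.exp (-2*α)|)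
        + 2*lam * ∫ s in (0:ℝ)..r, |FF lam α b s|)
        * Real.exp ((2*lam*(CP^2*r)) * r) := by
  have hPc := continuous_PP hb
  have hksc := continuous_ksol lam α
  set d : ℝ → ℝ := fun u => K u - ksol lam α u with hd
  have hdc : Continuous d := hK.sub hksc
  set η₁ : ℝ := ∫ s in (0:ℝ)..r, |(PP b s)⁻¹ - Real.exp (-2*α)| with hη₁
  set η₂ : ℝ := ∫ s in (0:ℝ)..r, |FF lam α b s| with hη₂
  have hη₁0 : 0 ≤ η₁ := intervalIntegral.integral_nonneg hr.le (fun u _ => abs_nonneg _)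
  have hη₂0 : 0 ≤ η₂ := intervalIntegral.integral_nonneg hr.le (fun u _ => abs_nonneg _)
  -- continuity of pieces
  have hc1 : Continuous fun s => (PP b s)⁻¹ - Real.exp (-2*α) :=
    (hPc.inv₀ (fun s => (PP_pos b s).ne')).sub continuous_const
  have hc2 : Continuous fun s => (∫ u in (0:ℝ)..s, PP b u * d u) / PP b s :=
    (continuous_parint (hPc.mul hdc)).div hPc (fun s => (PP_pos b s).ne')
  have hc3 : Continuous (FF lam α b) := continuous_FF hb lam α
  have hdx : ∀ x ∈ Icc (0:ℝ) r, d x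
      = (∫ s in (0:ℝ)..x, ((PP b s)⁻¹ - Real.exp (-2*α)))
        + 2*lam * (∫ s in (0:ℝ)..x, (∫ u in (0:ℝ)..s, PP b u * d u) / PP b s)
        + 2*lam * (∫ s in (0:ℝ)..x, FF lam α b s) := by
    intro x hx
    have h1 : d x = ∫ s in (0:ℝ)..x,
        (GG lam b K s / PP b s - Real.exp (-2*α) * Real.cosh (Real.sqrt (2*lam) * s)) := by
      rw [hd]
      dsimp only
      rw [hvol x hx, ksol_eq_int (α := α) hlam x, WW,
        ← intervalIntegral.integral_sub ((continuous_GP hb hK lam).intervalIntegrable _ _)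
          (((by fun_prop : Continuous fun s : ℝ =>
            Real.exp (-2*α) * Real.cosh (Real.sqrt (2*lam) * s))).intervalIntegrable _ _)]
    rw [h1, intervalIntegral.integral_congr
      (fun s _ => integrand_decomp (α := α) hlam hb hK s)]
    rw [intervalIntegral.integral_add (((hc1.add ((continuous_const.mul hc2)))).intervalIntegrable (u := fun s => (PP b s)⁻¹ - Real.exp (-2*α) + 2*lam * ((∫ u in (0:ℝ)..s, PP b u * d u) / PP b s)) _ _)
      ((continuous_const.mul hc3).intervalIntegrable (u := fun s => 2*lam * FF lam α b s) _ _),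
      intervalIntegral.integral_add (hc1.intervalIntegrable _ _)
      ((continuous_const.mul hc2).intervalIntegrable (u := fun s => 2*lam * ((∫ u in (0:ℝ)..s, PP b u * d u) / PP b s)) _ _),
      intervalIntegral.integral_const_mul, intervalIntegral.integral_const_mul]
  have hkey : ∀ x ∈ Icc (0:ℝ) r,
      |d x| ≤ (η₁ + 2*lam*η₂) + (2*lam*(CP^2*r)) * ∫ u in (0:ℝ)..x, |d u| := by
    intro x hx
    have h2 := hdx x hx
    have ha : |∫ s in (0:ℝ)..x, ((PP b s)⁻¹ - Real.exp (-2*α))| ≤ η₁ := abs_int_le hc1 hx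
    have hb2 : |∫ s in (0:ℝ)..x, (∫ u in (0:ℝ)..s, PP b u * d u) / PP b s|
        ≤ CP^2 * r * ∫ u in (0:ℝ)..x, |d u| := key_bound hr hb hCP1 hP hdc x hx
    have hcc : |∫ s in (0:ℝ)..x, FF lam α b s| ≤ η₂ := abs_int_le hc3 hx
    rw [h2]
    have t1 := abs_add_le (((∫ s in (0:ℝ)..x, ((PP b s)⁻¹ - Real.exp (-2*α))))
        + 2*lam * (∫ s in (0:ℝ)..x, (∫ u in (0:ℝ)..s, PP b u * d u) / PP b s))
      (2*lam * (∫ s in (0:ℝ)..x, FF lam α b s))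
    have t2 := abs_add_le ((∫ s in (0:ℝ)..x, ((PP b s)⁻¹ - Real.exp (-2*α))))
      (2*lam * (∫ s in (0:ℝ)..x, (∫ u in (0:ℝ)..s, PP b u * d u) / PP b s))
    rw [abs_mul, abs_of_pos (show (0:ℝ) < 2*lam by positivity)] at t1 t2
    have t3 : 2*lam * |∫ s in (0:ℝ)..x, (∫ u in (0:ℝ)..s, PP b u * d u) / PP b s|
        ≤ 2*lam * (CP^2 * r * ∫ u in (0:ℝ)..x, |d u|) :=
      mul_le_mul_of_nonneg_left hb2 (by positivity)
    have t4 : 2*lam * |∫ s in (0:ℝ)..x, FF lam α b s| ≤ 2*lam*η₂ :=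
      mul_le_mul_of_nonneg_left hcc (by positivity)
    calc |_ + _ + _| ≤ _ := t1
      _ ≤ _ := by linarith
  have hg := gron hr (by positivity) (by positivity : (0:ℝ) < 2*lam*(CP^2*r))
    hdc.continuousOn hkey
  intro x hx
  exact hg x hx


end PKaux

end

open PKaux

lemma solPK_congr {r lam : ℝ} {a b k : ℝ → ℝ} (hab : EqOn a b (Icc 0 r)) :
    SolPK r lam a k → SolPK r lam b k := by
  rintro ⟨h1, h2, h3, h4⟩
  exact ⟨h1, fun x hx => by rw [← hab hx]; exact h2 x hx, h3, h4⟩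

lemma int_abs_le_of_bound {r x Cg : ℝ} {g : ℝ → ℝ} (hr : 0 < r) (hg : Continuous g)
    (hx : x ∈ Icc (0:ℝ) r) (hC : ∀ u ∈ Icc (0:ℝ) r, |g u| ≤ Cg) :
    |∫ u in (0:ℝ)..x, g u| ≤ Cg * r := by
  have hC0 : 0 ≤ Cg := le_trans (abs_nonneg _) (hC 0 ⟨le_refl _, hr.le⟩)
  refine le_trans (intervalIntegral.abs_integral_le_integral_abs hx.1) ?_
  have h1 : ∫ u in (0:ℝ)..x, |g u| ≤ ∫ u in (0:ℝ)..x, Cg := by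
    apply intervalIntegral.integral_mono_on hx.1 (hg.abs.intervalIntegrable _ _)
      intervalIntegrable_const
    intro u hu
    exact hC u ⟨hu.1, hu.2.trans hx.2⟩
  rw [intervalIntegral.integral_const, smul_eq_mul, sub_zero] at h1
  nlinarith [hx.1, hx.2]



/-- existence and uniqueness of the solutions `k_ε` of
`(1/2)k'' + a_ε k' = λk`, `k(0)=0`, `k'(0)=1` on `[0,r]`, their uniform convergence as
`ε → 0+` to `x ↦ e^{−2α} sinh(√(2λ)x)/√(2λ)`, and the pointwise convergence of the
derivatives `k_ε'(x) → e^{−2α} cosh(√(2λ)x)` on `(0,r]`. -/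
theorem stmt10 (r lam α : ℝ) (hr : 0 < r) (hlam : 0 < lam)
    (a : ℝ → ℝ → ℝ)
    (hacont : ∀ ε > (0:ℝ), ContinuousOn (a ε) (Icc 0 r))
    (haM : ∃ M : ℝ, ∀ ε > (0:ℝ), ∫ u in (0:ℝ)..r, |a ε u| ≤ M)
    (hlim : ∀ y z : ℝ, 0 ≤ y → y < z → z ≤ r →
      Tendsto (fun ε => ∫ u in y..z, a ε u) (𝓝[>] (0:ℝ))
        (𝓝 (α * (if y = 0 then 1 else 0)))) :
    ∃ K : ℝ → ℝ → ℝ,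
      (∀ ε > (0:ℝ), SolPK r lam (a ε) (K ε) ∧
        (∀ k', SolPK r lam (a ε) k' → EqOn k' (K ε) (Icc 0 r))) ∧
      TendstoUniformlyOn (fun ε x => K ε x)
        (fun x => Real.exp (-2 * α) * Real.sinh (Real.sqrt (2 * lam) * x) /
          Real.sqrt (2 * lam))
        (𝓝[>] (0:ℝ)) (Icc 0 r) ∧
      (∀ x ∈ Ioc 0 r,
        Tendsto (fun ε => derivWithin (K ε) (Icc 0 r) x) (𝓝[>] (0:ℝ))
          (𝓝 (Real.exp (-2 * α) * Real.cosh (Real.sqrt (2 * lam) * x)))) := by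
  classical
  set l : Filter ℝ := 𝓝[>] (0:ℝ) with hl
  have hev : ∀ᶠ ε in l, 0 < ε := self_mem_nhdsWithin
  set bf : ℝ → ℝ → ℝ := fun ε => clampF r (a ε) with hbf
  have hbc : ∀ ε : ℝ, 0 < ε → Continuous (bf ε) :=
    fun ε hε => clampF_cont hr.le (hacont ε hε)
  -- choose solutions
  have hexall : ∀ ε : ℝ, ∃ k : ℝ → ℝ, 0 < ε → (Continuous k ∧ VolEq r lam (bf ε) k) := by
    intro ε
    by_cases hε : 0 < ε
    · obtain ⟨k, hk⟩ := exists_vol hr hlam (hbc ε hε)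
      exact ⟨k, fun _ => hk⟩
    · exact ⟨fun _ => 0, fun h => absurd h hε⟩
  choose K hK using hexall
  have hKc : ∀ ε : ℝ, 0 < ε → Continuous (K ε) := fun ε hε => (hK ε hε).1
  have hKvol : ∀ ε : ℝ, 0 < ε → VolEq r lam (bf ε) (K ε) := fun ε hε => (hK ε hε).2
  have hSV : ∀ ε : ℝ, 0 < ε → SolPK r lam (bf ε) (K ε) ∧
      ∀ y ∈ Icc 0 r, derivWithin (K ε) (Icc 0 r) y = GG lam (bf ε) (K ε) y / PP (bf ε) y :=
    fun ε hε => solOfVol hr (hbc ε hε) (hKc ε hε) (hKvol ε hε)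
  -- uniform bounds on PP
  obtain ⟨M, hM⟩ := haM
  set M' : ℝ := max M 0 with hM'
  set CP : ℝ := Real.exp (2 * M') with hCP
  have hCP1 : 1 ≤ CP := by
    rw [hCP, ← Real.exp_zero]
    apply Real.exp_le_exp.2
    positivity
  have hPbd : ∀ ε : ℝ, 0 < ε → ∀ x ∈ Icc (0:ℝ) r,
      PP (bf ε) x ≤ CP ∧ (PP (bf ε) x)⁻¹ ≤ CP := by
    intro ε hε x hx
    have hprim : |primit (bf ε) x| ≤ M' := by
      refine le_trans (abs_int_le (hbc ε hε) hx) ?_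
      have h1 : ∫ u in (0:ℝ)..r, |bf ε u| = ∫ u in (0:ℝ)..r, |a ε u| := by
        apply intervalIntegral.integral_congr
        intro u hu
        rw [uIcc_of_le hr.le] at hu
        show |clampF r (a ε) u| = |a ε u|
        rw [clampF_eqOn hr.le (a ε) hu]
      rw [h1]
      exact le_trans (hM ε hε) (le_max_left _ _)
    exact ⟨PP_le hprim, inv_PP_le hprim⟩
  -- pointwise convergence of PP
  have hprimlim : ∀ u ∈ Ioc (0:ℝ) r, Tendsto (fun ε => primit (bf ε) u) l (𝓝 α) := by
    intro u hu
    have heq : ∀ ε : ℝ, primit (bf ε) u = ∫ t in (0:ℝ)..u, a ε t := by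
      intro ε
      apply intervalIntegral.integral_congr
      intro t ht
      rw [uIcc_of_le hu.1.le] at ht
      exact clampF_eqOn hr.le (a ε) ⟨ht.1, ht.2.trans hu.2⟩
    simp only [heq]
    have := hlim 0 u (le_refl 0) hu.1 hu.2
    simpa using this
  have hptP : ∀ u ∈ Ioc (0:ℝ) r, Tendsto (fun ε => PP (bf ε) u) l (𝓝 (Real.exp (2*α))) := by
    intro u hu
    exact (Real.continuous_exp.tendsto (2*α)).comp ((hprimlim u hu).const_mul 2)
  have hinvP : ∀ u ∈ Ioc (0:ℝ) r,
      Tendsto (fun ε => (PP (bf ε) u)⁻¹) l (𝓝 (Real.exp (-2*α))) := by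
    intro u hu
    have h1 := (hptP u hu).inv₀ (Real.exp_ne_zero _)
    have h2 : (Real.exp (2*α))⁻¹ = Real.exp (-2*α) := by
      rw [← Real.exp_neg]
      ring_nf
    rwa [h2] at h1
  set ks : ℝ → ℝ := ksol lam α with hks
  have hksc : Continuous ks := continuous_ksol lam α
  set B₀ : ℝ := Real.exp (-2 * α) * Real.sinh (Real.sqrt (2 * lam) * r) / Real.sqrt (2 * lam)
    with hB₀
  have hksb : ∀ u ∈ Icc (0:ℝ) r, |ks u| ≤ B₀ := ksol_bound hlam hr
  -- inner DCT
  have hIn : ∀ s ∈ Ioc (0:ℝ) r, Tendsto (fun ε => ∫ u in (0:ℝ)..s, PP (bf ε) u * ks u) l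
      (𝓝 (Real.exp (2*α) * ∫ u in (0:ℝ)..s, ks u)) := by
    intro s hs
    have hgoal : (Real.exp (2*α) * ∫ u in (0:ℝ)..s, ks u)
        = ∫ u in (0:ℝ)..s, Real.exp (2*α) * ks u := by
      rw [intervalIntegral.integral_const_mul]
    rw [hgoal]
    apply intervalIntegral.tendsto_integral_filter_of_dominated_convergence
      (fun _ => CP * B₀)
    · filter_upwards [hev] with ε hε
      exact (((continuous_PP (hbc ε hε)).mul hksc)).aestronglyMeasurable.restrict
    · filter_upwards [hev] with ε hε
      apply ae_of_all
      intro u hu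
      rw [uIoc_of_le hs.1.le] at hu
      have hu' : u ∈ Icc (0:ℝ) r := ⟨hu.1.le, hu.2.trans hs.2⟩
      rw [Real.norm_eq_abs, abs_mul, abs_of_pos (PP_pos _ _)]
      apply mul_le_mul (hPbd ε hε u hu').1 (hksb u hu') (abs_nonneg _)
        (le_trans zero_le_one hCP1)
    · exact intervalIntegrable_const
    · apply ae_of_all
      intro u hu
      rw [uIoc_of_le hs.1.le] at hu
      exact (hptP u ⟨hu.1, hu.2.trans hs.2⟩).mul_const (ks u)
  -- η₁ → 0
  have hη₁ : Tendsto (fun ε => ∫ s in (0:ℝ)..r, |(PP (bf ε) s)⁻¹ - Real.exp (-2*α)|) l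
      (𝓝 0) := by
    rw [show (𝓝 (0:ℝ)) = 𝓝 (∫ s in (0:ℝ)..r, (0:ℝ)) by simp]
    apply intervalIntegral.tendsto_integral_filter_of_dominated_convergence
      (fun _ => CP + Real.exp (-2*α))
    · filter_upwards [hev] with ε hε
      exact (((continuous_PP (hbc ε hε)).inv₀ (fun s => (PP_pos _ s).ne')).sub
        continuous_const).abs.aestronglyMeasurable.restrict
    · filter_upwards [hev] with ε hε
      apply ae_of_all
      intro s hs
      rw [uIoc_of_le hr.le] at hs
      have hs' : s ∈ Icc (0:ℝ) r := ⟨hs.1.le, hs.2⟩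
      rw [Real.norm_eq_abs, abs_abs]
      refine le_trans (abs_sub _ _) ?_
      rw [abs_of_pos (inv_pos.2 (PP_pos _ _)),
        abs_of_pos (Real.exp_pos _)]
      exact add_le_add (hPbd ε hε s hs').2 (le_refl _)
    · exact intervalIntegrable_const
    · apply ae_of_all
      intro s hs
      rw [uIoc_of_le hr.le] at hs
      have h7 := ((hinvP s ⟨hs.1, hs.2⟩).sub
        (tendsto_const_nhds (x := Real.exp (-2*α)) (f := l))).abs
      simpa using h7
  -- η₂ → 0
  have hFB : ∀ ε : ℝ, 0 < ε → ∀ s ∈ Icc (0:ℝ) r,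
      |FF lam α (bf ε) s| ≤ CP * (CP * B₀ * r) + B₀ * r := by
    intro ε hε s hs
    have h1 : |∫ u in (0:ℝ)..s, PP (bf ε) u * ks u| ≤ CP * B₀ * r := by
      apply int_abs_le_of_bound (g := fun u => PP (bf ε) u * ks u) hr ((continuous_PP (hbc ε hε)).mul hksc) hs
      intro u hu
      rw [abs_mul, abs_of_pos (PP_pos _ _)]
      exact mul_le_mul (hPbd ε hε u hu).1 (hksb u hu) (abs_nonneg _)
        (le_trans zero_le_one hCP1)
    have h2 : |∫ u in (0:ℝ)..s, ks u| ≤ B₀ * r :=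
      int_abs_le_of_bound hr hksc hs hksb
    rw [FF]
    refine le_trans (abs_sub _ _) ?_
    rw [abs_mul, abs_of_pos (inv_pos.2 (PP_pos _ _))]
    have h3 : (PP (bf ε) s)⁻¹ * |∫ u in (0:ℝ)..s, PP (bf ε) u * ks u| ≤ CP * (CP * B₀ * r) := by
      apply mul_le_mul (hPbd ε hε s hs).2 h1 (abs_nonneg _) (le_trans zero_le_one hCP1)
    linarith
  have hη₂ : Tendsto (fun ε => ∫ s in (0:ℝ)..r, |FF lam α (bf ε) s|) l (𝓝 0) := by
    rw [show (𝓝 (0:ℝ)) = 𝓝 (∫ s in (0:ℝ)..r, (0:ℝ)) by simp]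
    apply intervalIntegral.tendsto_integral_filter_of_dominated_convergence
      (fun _ => CP * (CP * B₀ * r) + B₀ * r)
    · filter_upwards [hev] with ε hε
      exact (continuous_FF (hbc ε hε) lam α).abs.aestronglyMeasurable.restrict
    · filter_upwards [hev] with ε hε
      apply ae_of_all
      intro s hs
      rw [uIoc_of_le hr.le] at hs
      rw [Real.norm_eq_abs, abs_abs]
      exact hFB ε hε s ⟨hs.1.le, hs.2⟩
    · exact intervalIntegrable_const
    · apply ae_of_all
      intro s hs
      rw [uIoc_of_le hr.le] at hs
      have hs' : s ∈ Ioc (0:ℝ) r := hs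
      have hF : Tendsto (fun ε => FF lam α (bf ε) s) l (𝓝 0) := by
        have h1 := ((hinvP s hs').mul (hIn s hs')).sub
          (tendsto_const_nhds (x := ∫ u in (0:ℝ)..s, ks u) (f := l))
        have h2 : Real.exp (-2*α) * (Real.exp (2*α) * ∫ u in (0:ℝ)..s, ks u)
            - ∫ u in (0:ℝ)..s, ks u = 0 := by
          rw [← mul_assoc, ← Real.exp_add]
          norm_num
        rw [h2] at h1
        exact h1
      have := hF.abs
      simpa using this
  -- total error
  set ηη : ℝ → ℝ := fun ε => ((∫ s in (0:ℝ)..r, |(PP (bf ε) s)⁻¹ - Real.exp (-2*α)|)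
      + 2*lam * ∫ s in (0:ℝ)..r, |FF lam α (bf ε) s|) * Real.exp ((2*lam*(CP^2*r)) * r)
    with hηη
  have htot : Tendsto ηη l (𝓝 0) := by
    have h1 := (hη₁.add (hη₂.const_mul (2*lam))).mul_const (Real.exp ((2*lam*(CP^2*r)) * r))
    rw [show (0 + 2*lam*0) * Real.exp ((2*lam*(CP^2*r)) * r) = 0 by ring] at h1
    exact h1
  have herr : ∀ ε : ℝ, 0 < ε → ∀ x ∈ Icc (0:ℝ) r, |K ε x - ks x| ≤ ηη ε := by
    intro ε hε x hx
    exact err_bound hr hlam hCP1 (hbc ε hε) (hKc ε hε) (hPbd ε hε) (hKvol ε hε) x hx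
  refine ⟨K, ?_, ?_, ?_⟩
  · -- SolPK and uniqueness
    intro ε hε
    constructor
    · exact solPK_congr (fun x hx => (clampF_eqOn hr.le (a ε) hx)) (hSV ε hε).1
    · intro k' hk'
      have hk'b : SolPK r lam (bf ε) k' :=
        solPK_congr (fun x hx => (clampF_eqOn hr.le (a ε) hx).symm) hk'
      have hk'vol : VolEq r lam (bf ε) k' := volOfSol hr (hbc ε hε) hk'b
      exact volEq_unique hr hlam (hbc ε hε) hk'b.1.continuousOn
        (hKc ε hε).continuousOn hk'vol (hKvol ε hε)
  · -- uniform convergence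
    rw [Metric.tendstoUniformlyOn_iff]
    intro δ hδ
    filter_upwards [hev, htot.eventually (gt_mem_nhds hδ)] with ε hε hηδ
    intro x hx
    rw [Real.dist_eq]
    have h1 := herr ε hε x hx
    have h2 : |Real.exp (-2 * α) * Real.sinh (Real.sqrt (2 * lam) * x) / Real.sqrt (2 * lam)
        - K ε x| = |K ε x - ks x| := by
      rw [abs_sub_comm]
      rfl
    rw [h2]
    exact lt_of_le_of_lt h1 hηδ
  · -- derivative convergence
    intro x hx
    have hx' : x ∈ Icc (0:ℝ) r := ⟨hx.1.le, hx.2⟩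
    set S : ℝ := ∫ u in (0:ℝ)..x, ks u with hS
    -- split the derivative formula
    have hsplit : ∀ ε : ℝ, 0 < ε → derivWithin (K ε) (Icc 0 r) x
        = (PP (bf ε) x)⁻¹ * (1 + 2*lam*((∫ u in (0:ℝ)..x, PP (bf ε) u * ks u)
            + ∫ u in (0:ℝ)..x, PP (bf ε) u * (K ε u - ks u))) := by
      intro ε hε
      rw [(hSV ε hε).2 x hx']
      have hPc := continuous_PP (hbc ε hε)
      have hsub : (∫ u in (0:ℝ)..x, PP (bf ε) u * K ε u)
          = (∫ u in (0:ℝ)..x, PP (bf ε) u * ks u)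
            + ∫ u in (0:ℝ)..x, PP (bf ε) u * (K ε u - ks u) := by
        rw [← intervalIntegral.integral_add ((hPc.mul hksc).intervalIntegrable (u := fun u => PP (bf ε) u * ks u) _ _)
          ((hPc.mul ((hKc ε hε).sub hksc)).intervalIntegrable (u := fun u => PP (bf ε) u * (K ε u - ks u)) _ _)]
        congr 1; ext u; ring
      rw [GG, hsub, div_eq_mul_inv]
      ring
    -- limits of the pieces
    have hBz : Tendsto (fun ε => ∫ u in (0:ℝ)..x, PP (bf ε) u * (K ε u - ks u)) l (𝓝 0) := by
      have hg : Tendsto (fun ε => CP * ηη ε * r) l (𝓝 0) := by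
        have h1 := (htot.const_mul CP).mul_const r
        rw [show CP * 0 * r = 0 by ring] at h1
        exact h1
      apply squeeze_zero_norm' ?_ hg
      filter_upwards [hev] with ε hε
      rw [Real.norm_eq_abs]
      have hb := int_abs_le_of_bound (g := fun u => PP (bf ε) u * (K ε u - ks u)) hr
        ((continuous_PP (hbc ε hε)).mul ((hKc ε hε).sub hksc)) hx'
        (Cg := CP * ηη ε) ?_
      · linarith
      · intro u hu
        rw [abs_mul, abs_of_pos (PP_pos _ _)]
        exact mul_le_mul (hPbd ε hε u hu).1 (herr ε hε u hu) (abs_nonneg _)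
          (le_trans zero_le_one hCP1)
    have hmain : Tendsto (fun ε => (PP (bf ε) x)⁻¹
        * (1 + 2*lam*((∫ u in (0:ℝ)..x, PP (bf ε) u * ks u)
            + ∫ u in (0:ℝ)..x, PP (bf ε) u * (K ε u - ks u)))) l
        (𝓝 (Real.exp (-2*α) * (1 + 2*lam*(Real.exp (2*α) * S + 0)))) := by
      apply (hinvP x hx).mul
      exact tendsto_const_nhds.add (((hIn x hx).add hBz).const_mul (2*lam))
    have hval : Real.exp (-2*α) * (1 + 2*lam*(Real.exp (2*α) * S + 0))
        = Real.exp (-2 * α) * Real.cosh (Real.sqrt (2 * lam) * x) := by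
      have hksx := ksol_int (lam := lam) (α := α) hlam x
      rw [← hks] at hksx
      rw [← hS] at hksx
      have he : Real.exp (-2*α) * Real.exp (2*α) = 1 := by
        rw [← Real.exp_add]
        have h9 : (-2*α) + (2*α) = 0 := by ring
        rw [h9, Real.exp_zero]
      linear_combination (2*lam*S) * he + hksx
    rw [hval] at hmain
    apply hmain.congr'
    filter_upwards [hev] with ε hε
    exact (hsplit ε hε).symm
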